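/- The space G = {x ∈ {0,1}^{ℕ×ℕ} : for every j ∈ ℕ, x_{i,j} = 0 for all but finitely many i ∈ ℕ}, with the subspace topology inherited from the product topology on {0,1}^{ℕ×ℕ} ({0,1} discrete), is homeomorphic to ℚ^ℕ, the countable power of the rationals with the product topology. -/

import Mathlib

open Set Filter Topology

namespace Stmt13Aux

/-- the "low" value at position `n` : alternating. -/
def lowv (n : ℕ) : ZMod 2 := if Even n then 0 else 1

/-- finitely supported 0-1 sequences -/
def Sig : Set (ℕ → ZMod 2) := {x | {i | x i ≠ 0}.Finite}

/-- alternating lexicographic strict order -/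
def slt (x y : ℕ → ZMod 2) : Prop :=
  ∃ n, (∀ k < n, x k = y k) ∧ x n ≠ y n ∧ x n = lowv n

lemma zmod2_resolve : ∀ a b c : ZMod 2, a ≠ b → a ≠ c → b = c := by decide

lemma zmod2_det : ∀ a b : ZMod 2, (a ≠ 0 ↔ b ≠ 0) → a = b := by decide

lemma slt_trans {x y z : ℕ → ZMod 2} (h1 : slt x y) (h2 : slt y z) : slt x z := by
  obtain ⟨n, hn, hxy, hlow⟩ := h1
  obtain ⟨m, hm, hyz, hlow'⟩ := h2
  rcases lt_trichotomy n m with h | h | h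
  · exact ⟨n, fun k hk => (hn k hk).trans (hm k (hk.trans h)), by rw [← hm n h]; exact hxy, hlow⟩
  · subst h
    exact absurd hlow' (by rw [← hlow]; exact fun e => hxy e.symm)
  · exact ⟨m, fun k hk => (hn k (hk.trans h)).trans (hm k hk),
      by rw [hn m h]; exact hyz, by rw [hn m h]; exact hlow'⟩

lemma slt_irrefl (x : ℕ → ZMod 2) : ¬ slt x x := by
  rintro ⟨n, -, h, -⟩; exact h rfl

lemma slt_trichotomy (x y : ℕ → ZMod 2) (hxy : x ≠ y) : slt x y ∨ slt y x := by
  have hex : ∃ n, x n ≠ y n := by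
    by_contra h
    push_neg at h
    exact hxy (funext h)
  classical
  set n := Nat.find hex with hn
  have h1 : x n ≠ y n := Nat.find_spec hex
  have h2 : ∀ k < n, x k = y k := fun k hk => by
    have := Nat.find_min hex hk
    simpa using this
  rcases eq_or_ne (x n) (lowv n) with h | h
  · exact Or.inl ⟨n, h2, h1, h⟩
  · exact Or.inr ⟨n, fun k hk => (h2 k hk).symm, fun e => h1 e.symm,
      zmod2_resolve (x n) (y n) (lowv n) h1 h⟩

/-- the strict order on the subtype -/
def sslt (x y : ↥Sig) : Prop := slt x.1 y.1

instance : IsStrictTotalOrder ↥Sig sslt where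
  trichotomous x y := by
    intro h1 h2
    by_contra h
    rcases slt_trichotomy x.1 y.1 (fun e => h (Subtype.ext e)) with h' | h'
    · exact h1 h'
    · exact h2 h'
  irrefl x := slt_irrefl x.1
  trans _ _ _ := slt_trans

noncomputable instance : LinearOrder ↥Sig :=
  @linearOrderOfSTO _ sslt _ (Classical.decRel _)

lemma lt_iff {x y : ↥Sig} : x < y ↔ slt x.1 y.1 := Iff.rfl

/-- support bound -/
lemma exists_bound (x : ↥Sig) : ∃ N, ∀ i, N ≤ i → x.1 i = 0 := by
  obtain ⟨N, hN⟩ := x.2.bddAbove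
  exact ⟨N + 1, fun i hi => by
    by_contra h
    exact absurd (hN h) (by omega)⟩

lemma exists_even (x : ↥Sig) (n : ℕ) : ∃ m, n ≤ m ∧ x.1 m = 0 ∧ Even m := by
  obtain ⟨N, hN⟩ := exists_bound x
  exact ⟨2 * (N + n) + 2, by omega, hN _ (by omega), ⟨N + n + 1, by ring⟩⟩

lemma exists_odd (x : ↥Sig) (n : ℕ) : ∃ m, n ≤ m ∧ x.1 m = 0 ∧ Odd m := by
  obtain ⟨N, hN⟩ := exists_bound x
  exact ⟨2 * (N + n) + 1, by omega, hN _ (by omega), ⟨N + n, by ring⟩⟩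

/-- flipping one zero coordinate to one stays in Sig -/
lemma flip_mem (x : ↥Sig) (m : ℕ) : Function.update x.1 m 1 ∈ Sig := by
  apply Set.Finite.subset (Set.Finite.insert m x.2)
  intro i hi
  rcases eq_or_ne i m with rfl | h
  · exact Set.mem_insert _ _
  · right
    simpa [Function.update_of_ne h] using hi

/-- flip `x` at position `m` to the value `1` -/
def flip (x : ↥Sig) (m : ℕ) : ↥Sig := ⟨Function.update x.1 m 1, flip_mem x m⟩

lemma flip_apply_self (x : ↥Sig) (m : ℕ) : (flip x m).1 m = 1 :=
  Function.update_self m 1 x.1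

lemma flip_apply_ne (x : ↥Sig) {m k : ℕ} (h : k ≠ m) : (flip x m).1 k = x.1 k :=
  Function.update_of_ne h 1 x.1

lemma flip_gt (x : ↥Sig) (m : ℕ) (h0 : x.1 m = 0) (he : Even m) : x < flip x m := by
  refine lt_iff.2 ⟨m, fun k hk => (flip_apply_ne x (by omega)).symm, ?_, ?_⟩
  · rw [flip_apply_self, h0]; decide
  · rw [h0]; simp [lowv, he]

lemma flip_lt (x : ↥Sig) (m : ℕ) (h0 : x.1 m = 0) (he : Odd m) : flip x m < x := by
  refine lt_iff.2 ⟨m, fun k hk => flip_apply_ne x (by omega), ?_, ?_⟩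
  · rw [flip_apply_self, h0]; decide
  · rw [flip_apply_self]; simp [lowv, Nat.not_even_iff_odd.2 he]

instance : Nonempty ↥Sig := ⟨⟨fun _ => 0, by simp [Sig]⟩⟩

instance : NoMinOrder ↥Sig where
  exists_lt x := by
    obtain ⟨m, -, h0, hodd⟩ := exists_odd x 0
    exact ⟨_, flip_lt x m h0 hodd⟩

instance : NoMaxOrder ↥Sig where
  exists_gt x := by
    obtain ⟨m, -, h0, heven⟩ := exists_even x 0
    exact ⟨_, flip_gt x m h0 heven⟩

instance : DenselyOrdered ↥Sig where
  dense x y hxy := by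
    obtain ⟨n, hn, hne, hlow⟩ := lt_iff.1 hxy
    obtain ⟨m, hm, h0, heven⟩ := exists_even x (n + 1)
    refine ⟨flip x m, flip_gt x m h0 heven, lt_iff.2 ⟨n, ?_, ?_, ?_⟩⟩
    · intro k hk
      rw [flip_apply_ne x (by omega)]
      exact hn k hk
    · rw [flip_apply_ne x (by omega)]; exact hne
    · rw [flip_apply_ne x (by omega)]; exact hlow

instance : Countable ↥Sig := by
  have : Function.Injective (fun x : ↥Sig => x.2.toFinset) := by
    intro x y h
    simp only [Set.Finite.toFinset_inj] at h
    ext1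
    funext i
    have h' : (x.1 i ≠ 0) ↔ (y.1 i ≠ 0) := by have := Set.ext_iff.1 (Set.Finite.toFinset_inj.1 h) i; exact this
    exact zmod2_det _ _ h'
  exact Function.Injective.countable this

/-! ### Topology -/

def cyl (x : ↥Sig) (n : ℕ) : Set ↥Sig := {z | ∀ k < n, z.1 k = x.1 k}

lemma mem_cyl_self (x : ↥Sig) (n : ℕ) : x ∈ cyl x n := fun _ _ => rfl

lemma isOpen_cyl (x : ↥Sig) (n : ℕ) : IsOpen (cyl x n) := by
  have hopen : IsOpen (⋂ k ∈ Finset.range n, {f : ℕ → ZMod 2 | f k = x.1 k}) := by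
    apply isOpen_biInter_finset
    intro k _
    have : {f : ℕ → ZMod 2 | f k = x.1 k} = (fun f : ℕ → ZMod 2 => f k) ⁻¹' {x.1 k} := rfl
    rw [this]
    exact (isOpen_discrete {x.1 k}).preimage (continuous_apply k)
  have : cyl x n = Subtype.val ⁻¹' (⋂ k ∈ Finset.range n, {f : ℕ → ZMod 2 | f k = x.1 k}) := by
    ext z
    simp [cyl, Set.mem_iInter, Finset.mem_range]
  rw [this]
  exact hopen.preimage continuous_subtype_val

lemma isOpen_Ioi' (a : ↥Sig) : IsOpen (Set.Ioi a) := by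
  rw [isOpen_iff_forall_mem_open]
  intro x hx
  obtain ⟨n, hn, hne, hlow⟩ := lt_iff.1 hx
  refine ⟨cyl x (n + 1), fun z hz => lt_iff.2 ⟨n, ?_, ?_, hlow⟩,
    isOpen_cyl x (n + 1), mem_cyl_self x (n + 1)⟩
  · exact fun k hk => (hn k hk).trans (hz k (by omega)).symm
  · rw [hz n (by omega)]; exact hne

lemma isOpen_Iio' (b : ↥Sig) : IsOpen (Set.Iio b) := by
  rw [isOpen_iff_forall_mem_open]
  intro x hx
  obtain ⟨n, hn, hne, hlow⟩ := lt_iff.1 hx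
  refine ⟨cyl x (n + 1), fun z hz => lt_iff.2 ⟨n, ?_, ?_, ?_⟩,
    isOpen_cyl x (n + 1), mem_cyl_self x (n + 1)⟩
  · exact fun k hk => (hz k (by omega)).trans (hn k hk)
  · rw [hz n (by omega)]; exact hne
  · rw [hz n (by omega)]; exact hlow

lemma isOpen_Ioo' (a b : ↥Sig) : IsOpen (Set.Ioo a b) :=
  (isOpen_Ioi' a).inter (isOpen_Iio' b)

/-- every cylinder around `x` contains an open order interval around `x` -/
lemma cyl_order_nbhd (x : ↥Sig) (n : ℕ) :
    ∃ a b : ↥Sig, a < x ∧ x < b ∧ Set.Ioo a b ⊆ cyl x n := by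
  obtain ⟨m₁, hm₁, h₁0, hodd⟩ := exists_odd x n
  obtain ⟨m₂, hm₂, h₂0, heven⟩ := exists_even x n
  refine ⟨flip x m₁, flip x m₂, flip_lt x m₁ h₁0 hodd, flip_gt x m₂ h₂0 heven, ?_⟩
  rintro z ⟨haz, hzb⟩
  intro k hk
  by_contra hne0
  have hex : ∃ j, z.1 j ≠ x.1 j := ⟨k, hne0⟩
  classical
  set K := Nat.find hex with hK
  have hKspec : z.1 K ≠ x.1 K := Nat.find_spec hex
  have hKmin : ∀ j < K, z.1 j = x.1 j := fun j hj => by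
    have := Nat.find_min hex hj
    simpa using this
  have hKn : K < n := lt_of_le_of_lt (Nat.find_min' hex hne0) hk
  rcases eq_or_ne (z.1 K) (lowv K) with hzl | hzl
  · -- z < a, contradiction with a < z
    have : z < flip x m₁ := by
      refine lt_iff.2 ⟨K, fun j hj => ?_, ?_, hzl⟩
      · rw [flip_apply_ne x (by omega)]
        exact hKmin j hj
      · rw [flip_apply_ne x (by omega)]
        exact hKspec
    exact absurd (haz.trans this) (lt_irrefl _)
  · -- b < z, contradiction with z < b
    have hxl : x.1 K = lowv K := zmod2_resolve (z.1 K) (x.1 K) (lowv K) hKspec hzl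
    have : flip x m₂ < z := by
      refine lt_iff.2 ⟨K, fun j hj => ?_, ?_, ?_⟩
      · rw [flip_apply_ne x (by omega)]
        exact (hKmin j hj).symm
      · rw [flip_apply_ne x (by omega)]
        exact fun e => hKspec e.symm
      · rw [flip_apply_ne x (by omega)]
        exact hxl
    exact absurd (this.trans hzb) (lt_irrefl _)

/-- the main homeomorphism with ℚ -/
noncomputable def sigHomeoRat : ↥Sig ≃ₜ ℚ := by
  have hφ := Order.iso_of_countable_dense ↥Sig ℚ
  let φ : ↥Sig ≃o ℚ := hφ.some
  have hlt1 : ∀ (q : ℚ) (z : ↥Sig), φ.symm q < z ↔ q < φ z := fun q z => by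
    conv_rhs => rw [← φ.apply_symm_apply q]
    exact (φ.lt_iff_lt).symm
  have hlt2 : ∀ (q : ℚ) (z : ↥Sig), z < φ.symm q ↔ φ z < q := fun q z => by
    conv_rhs => rw [← φ.apply_symm_apply q]
    exact (φ.lt_iff_lt).symm
  refine ⟨φ.toEquiv, ?_, ?_⟩
  · -- continuity of φ
    refine continuous_iff_continuousAt.2 fun x => ?_
    refine ((nhds_basis_Ioo (φ x)).tendsto_right_iff).2 ?_
    rintro ⟨q₁, q₂⟩ ⟨hq₁, hq₂⟩
    have hopen : IsOpen (Set.Ioo (φ.symm q₁) (φ.symm q₂)) := isOpen_Ioo' _ _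
    have hmem : x ∈ Set.Ioo (φ.symm q₁) (φ.symm q₂) := by
      constructor
      · exact (hlt1 q₁ x).2 hq₁
      · exact (hlt2 q₂ x).2 hq₂
    filter_upwards [hopen.mem_nhds hmem] with z hz
    constructor
    · exact (hlt1 q₁ z).1 hz.1
    · exact (hlt2 q₂ z).1 hz.2
  · -- continuity of φ.symm
    show Continuous fun q : ℚ => φ.symm q
    refine Continuous.subtype_mk (f := fun q : ℚ => (φ.symm q).1) ?_ _
    apply continuous_pi
    intro m
    rw [continuous_discrete_rng]
    intro v
    rw [isOpen_iff_forall_mem_open]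
    intro q hq
    simp only [Set.mem_preimage, Set.mem_singleton_iff] at hq
    obtain ⟨a, b, ha, hb, hab⟩ := cyl_order_nbhd (φ.symm q) (m + 1)
    refine ⟨Set.Ioo (φ a) (φ b), ?_, isOpen_Ioo, ?_⟩
    · intro q' hq'
      have hmem : φ.symm q' ∈ Set.Ioo a b := by
        constructor
        · exact (hlt2 q' a).2 hq'.1
        · exact (hlt1 q' b).2 hq'.2
      have := hab hmem m (by omega)
      simp only [Set.mem_preimage, Set.mem_singleton_iff]
      rw [this, hq]
    · constructor
      · simpa using (OrderIso.lt_iff_lt φ).2 ha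
      · simpa using (OrderIso.lt_iff_lt φ).2 hb

end Stmt13Aux

/-- The group `G ≤ {0,1}^(ℕ×ℕ)`. -/
def Gset : Set ((ℕ × ℕ) → ZMod 2) :=
  {x | ∀ j : ℕ, {i : ℕ | x (i, j) ≠ 0}.Finite}

open Stmt13Aux in
/-- `G`, as a subspace of the Cantor cube, is homeomorphic to `ℚ^ℕ`. -/
theorem stmt_13 : Nonempty (↥Gset ≃ₜ (ℕ → ℚ)) := by
  have e1 : ↥Gset ≃ₜ (ℕ → ↥Sig) := by
    refine ⟨⟨fun x j => ⟨fun i => x.1 (i, j), x.2 j⟩,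
      fun y => ⟨fun p => (y p.2).1 p.1, fun j => (y j).2⟩, ?_, ?_⟩, ?_, ?_⟩
    · intro x; ext ⟨i, j⟩; rfl
    · intro y; ext j i; rfl
    · apply continuous_pi
      intro j
      apply Continuous.subtype_mk
      apply continuous_pi
      intro i
      exact (continuous_apply (i, j)).comp continuous_subtype_val
    · apply Continuous.subtype_mk
      apply continuous_pi
      intro p
      exact (continuous_apply p.1).comp (continuous_subtype_val.comp (continuous_apply p.2))
  exact ⟨e1.trans (Homeomorph.piCongrRight fun _ => sigHomeoRat)⟩
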